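/- Let α > 2β > 0 with ᾱ = α/gcd(α,2β) odd, and let F' be the reduced map F'(z) = z + 4β if z mod α < α - 2β, else z - 2(α-2β). For the uniform probability measure μ₀ on {0,…,α-1} and its push-forwards μ_t under F', the expectation E_t(ξ) = Σ_z z·μ_t(z) is independent of t and equals (α-1)/2. -/

import Mathlib

/-- The reduced interval-exchange map F' on ℤ. -/
def Fred (α β : ℤ) (z : ℤ) : ℤ :=
  if z % α < α - 2 * β then z + 4 * β else z - 2 * (α - 2 * β)

lemma Fred_eq (α β w : ℤ) :
    Fred α β w = w + 4 * β - (if w % α < α - 2 * β then 0 else 2 * α) := by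
  unfold Fred; split_ifs <;> ring

lemma Fred_mod (α β w : ℤ) : (Fred α β w) % α = (w + 4 * β) % α := by
  unfold Fred
  split_ifs with h
  · rfl
  · have : w - 2 * (α - 2 * β) = w + 4 * β + α * (-2) := by ring
    rw [this, Int.add_mul_emod_self_left]

lemma Fred_iter_mod (α β : ℤ) (t : ℕ) (z : ℤ) :
    ((Fred α β)^[t] z) % α = (z + 4 * β * t) % α := by
  induction t with
  | zero => simp
  | succ t ih =>
    rw [Function.iterate_succ_apply', Fred_mod, ← Int.emod_add_emod, ih,
      Int.emod_add_emod]
    push_cast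
    ring_nf

lemma shift_sum (α : ℤ) (hα : 0 < α) (c : ℤ) (f : ℤ → ℤ) :
    ∑ z ∈ Finset.range α.toNat, f (((z : ℤ) + c) % α) =
      ∑ z ∈ Finset.range α.toNat, f (z : ℤ) := by
  have hne : α ≠ 0 := ne_of_gt hα
  apply Finset.sum_nbij' (i := fun z : ℕ => (((z : ℤ) + c) % α).toNat)
    (j := fun z : ℕ => (((z : ℤ) - c) % α).toNat)
  · intro a _
    have h1 := Int.emod_nonneg ((a : ℤ) + c) hne
    have h2 := Int.emod_lt_of_pos ((a : ℤ) + c) hα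
    simp only [Finset.mem_range]
    omega
  · intro a _
    have h1 := Int.emod_nonneg ((a : ℤ) - c) hne
    have h2 := Int.emod_lt_of_pos ((a : ℤ) - c) hα
    simp only [Finset.mem_range]
    omega
  · intro a ha
    simp only [Finset.mem_range] at ha
    have h1 := Int.emod_nonneg ((a : ℤ) + c) hne
    have hcast : ((((a : ℤ) + c) % α).toNat : ℤ) = ((a : ℤ) + c) % α :=
      Int.toNat_of_nonneg h1
    have key : ((((a : ℤ) + c) % α) - c) % α = (a : ℤ) % α := by
      conv_rhs => rw [show (a : ℤ) = (a : ℤ) + c - c by ring]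
      rw [Int.sub_emod, Int.emod_emod_of_dvd _ dvd_rfl, ← Int.sub_emod]
    have ha' : (a : ℤ) % α = (a : ℤ) := Int.emod_eq_of_lt (by positivity) (by omega)
    simp only [hcast, key, ha', Int.toNat_natCast]
  · intro a ha
    simp only [Finset.mem_range] at ha
    have h1 := Int.emod_nonneg ((a : ℤ) - c) hne
    have hcast : ((((a : ℤ) - c) % α).toNat : ℤ) = ((a : ℤ) - c) % α :=
      Int.toNat_of_nonneg h1
    have key : ((((a : ℤ) - c) % α) + c) % α = (a : ℤ) % α := by
      conv_rhs => rw [show (a : ℤ) = (a : ℤ) - c + c by ring]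
      rw [Int.add_emod, Int.emod_emod_of_dvd _ dvd_rfl, ← Int.add_emod]
    have ha' : (a : ℤ) % α = (a : ℤ) := Int.emod_eq_of_lt (by positivity) (by omega)
    simp only [hcast, key, ha', Int.toNat_natCast]
  · intro a _
    have h1 := Int.emod_nonneg ((a : ℤ) + c) hne
    rw [Int.toNat_of_nonneg h1]

lemma ite_sum (α β : ℤ) (hβ : 0 < β) (hαβ : 2 * β < α) (c : ℤ) :
    ∑ z ∈ Finset.range α.toNat,
      (if ((z : ℤ) + c) % α < α - 2 * β then (0 : ℤ) else 2 * α) = 4 * α * β := by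
  have hα : 0 < α := by omega
  rw [shift_sum α hα c (fun x => if x < α - 2 * β then (0 : ℤ) else 2 * α)]
  have hk : (α - 2 * β).toNat ≤ α.toNat := by omega
  set k := (α - 2 * β).toNat with hkdef
  rw [Finset.range_eq_Ico, ← Finset.sum_Ico_consecutive _ (Nat.zero_le k) hk]
  have h1 : ∑ z ∈ Finset.Ico 0 k, (if (z : ℤ) < α - 2 * β then (0 : ℤ) else 2 * α) = 0 := by
    apply Finset.sum_eq_zero
    intro x hx
    simp only [Finset.mem_Ico] at hx
    rw [if_pos (by omega)]
  have h2 : ∑ z ∈ Finset.Ico k α.toNat,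
      (if (z : ℤ) < α - 2 * β then (0 : ℤ) else 2 * α) =
      ∑ _z ∈ Finset.Ico k α.toNat, (2 * α) := by
    apply Finset.sum_congr rfl
    intro x hx
    simp only [Finset.mem_Ico] at hx
    rw [if_neg (by omega)]
  rw [h1, h2, Finset.sum_const, Nat.card_Ico, zero_add, nsmul_eq_mul]
  have : ((α.toNat - k : ℕ) : ℤ) = 2 * β := by omega
  rw [this]; ring

/-- The expectation of the push-forward under F' of the uniform measure on {0,…,α-1}
is independent of t and equals (α-1)/2; equivalently the α-fold sum equals α(α-1)/2. -/
theorem stmt18 (α β : ℤ) (hβ : 0 < β) (hαβ : 2 * β < α)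
    (abar : ℕ) (habar : (abar : ℤ) = α / Int.gcd α (2 * β)) (hodd : Odd abar) :
    ∀ t : ℕ, (∑ z ∈ Finset.range α.toNat, (Fred α β)^[t] (z : ℤ)) = α * (α - 1) / 2 := by
  have hα : 0 < α := by omega
  intro t
  induction t with
  | zero =>
    simp only [Function.iterate_zero, id_eq]
    rw [← Nat.cast_sum]
    have h1 : 1 ≤ α.toNat := by omega
    have hta : (α.toNat : ℤ) = α := by omega
    have hc := Finset.sum_range_id_mul_two α.toNat
    have hcast : ((∑ i ∈ Finset.range α.toNat, i : ℕ) : ℤ) * 2 =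
        (α.toNat : ℤ) * ((α.toNat : ℤ) - 1) := by
      rw [← Nat.cast_ofNat, ← Nat.cast_mul, hc, Nat.cast_mul, Nat.cast_sub h1]
      norm_num
    rw [hta] at hcast
    omega
  | succ t ih =>
    have key : ∑ z ∈ Finset.range α.toNat, (Fred α β)^[t + 1] (z : ℤ) =
        ∑ z ∈ Finset.range α.toNat, (Fred α β)^[t] (z : ℤ) := by
      have step : ∀ z : ℕ, (Fred α β)^[t + 1] (z : ℤ) =
          (Fred α β)^[t] (z : ℤ) + 4 * β -
            (if ((z : ℤ) + 4 * β * t) % α < α - 2 * β then 0 else 2 * α) := by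
        intro z
        rw [Function.iterate_succ_apply', Fred_eq, Fred_iter_mod]
      calc ∑ z ∈ Finset.range α.toNat, (Fred α β)^[t + 1] (z : ℤ)
          = ∑ z ∈ Finset.range α.toNat, ((Fred α β)^[t] (z : ℤ) + 4 * β -
              (if ((z : ℤ) + 4 * β * t) % α < α - 2 * β then 0 else 2 * α)) := by
            exact Finset.sum_congr rfl (fun z _ => step z)
        _ = (∑ z ∈ Finset.range α.toNat, (Fred α β)^[t] (z : ℤ)) +
              (α.toNat : ℤ) * (4 * β) - 4 * α * β := by
            rw [Finset.sum_sub_distrib, Finset.sum_add_distrib, Finset.sum_const,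
              nsmul_eq_mul, ite_sum α β hβ hαβ (4 * β * t), Finset.card_range]
        _ = ∑ z ∈ Finset.range α.toNat, (Fred α β)^[t] (z : ℤ) := by
            have : ((α.toNat : ℕ) : ℤ) = α := Int.toNat_of_nonneg (le_of_lt hα)
            rw [this]; ring
    rw [key, ih]
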